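/- Let G be a looped simple graph with adjacency matrix A over GF(2). Then the two-variable interlace polynomial q(G)(x,y) = Σ_{S ⊆ V(G)} (x−1)^{rank A[S]} (y−1)^{|S| − rank A[S]} satisfies q(G)(x,y) = Σ_{T} (x−1)^{|S(T)|} (y−1)^{|V(G)| − r(T)} (x−1)^{r(T) − |V(G)|}, where T ranges over transversals of W(G) avoiding all ψ-elements, S(T) = {v : (v,χ)∈T}, and r(T) is the GF(2)-rank of the columns of IAS(G) indexed by T; equivalently q(G) is obtained from the section of the parametrized rank polynomial of M(IAS(G)) over transversals by the substitution a(v,φ)=1, a(v,χ)=x−1, a(v,ψ)=0, all b≡1, s=y−1, z=1/(x−1). The key identity is: for every S ⊆ V(G), |V(G)| − r(T_S) = |S| − rank A[S] where T_S = {(v,χ):v∈S} ∪ {(v,φ):v∉S}. -/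

import Mathlib

/-- The three column types of the matrix `IAS(G) = (I | A | I+A)`. -/
inductive GType : Type
  | phi | chi | psi
  deriving DecidableEq

instance : Fintype GType :=
  ⟨{GType.phi, GType.chi, GType.psi}, fun x => by cases x <;> simp⟩

/-- The column of `IAS(G) = (I | A(G) | I+A(G))` indexed by a ground set element of
`W(G) = V × {φ, χ, ψ}`. -/
def iasCol {V : Type} [DecidableEq V] (A : Matrix V V (ZMod 2)) : V × GType → V → ZMod 2
  | (v, GType.phi) => fun w => if w = v then 1 else 0
  | (v, GType.chi) => fun w => A w v
  | (v, GType.psi) => fun w => (if w = v then 1 else 0) + A w v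

/-- Independence in the binary matroid `M(IAS(G))`: a set of ground elements is independent
iff the corresponding columns of `IAS(G)` are linearly independent over `GF(2)`. -/
def IasIndep {V : Type} [DecidableEq V] (A : Matrix V V (ZMod 2))
    (S : Set (V × GType)) : Prop :=
  LinearIndependent (ZMod 2) (fun p : S => iasCol A p.1)

/-- A circuit of `M(IAS(G))`: a minimal dependent set. -/
def IasCircuit {V : Type} [DecidableEq V] (A : Matrix V V (ZMod 2))
    (C : Set (V × GType)) : Prop :=
  ¬ IasIndep A C ∧ ∀ D : Set (V × GType), D ⊂ C → IasIndep A D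

/-- The rank of a subset of the ground set of `M(IAS(G))`: the `GF(2)`-rank of the
corresponding set of columns of `IAS(G)`. -/
noncomputable def iasRk {V : Type} [Fintype V] [DecidableEq V] (A : Matrix V V (ZMod 2))
    (S : Set (V × GType)) : ℕ :=
  Module.finrank (ZMod 2) (Submodule.span (ZMod 2) (iasCol A '' S))

/-- The transversal `T_S = {(v,χ) : v ∈ S} ∪ {(v,φ) : v ∉ S}` of `W(G)` (a transversal
with no `ψ`-elements; every ψ-free transversal is of this form, with `S = S(T)`). -/
def chiPhiTransversal {V : Type} (S : Finset V) : Set (V × GType) :=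
  {p | (p.2 = GType.chi ∧ p.1 ∈ S) ∨ (p.2 = GType.phi ∧ p.1 ∉ S)}

/-- The rank of the principal submatrix `A[S]` over `GF(2)`. -/
noncomputable def principalRank {V : Type} [Fintype V] [DecidableEq V]
    (A : Matrix V V (ZMod 2)) (S : Finset V) : ℕ :=
  (A.submatrix (fun a : {a : V // a ∈ S} => a.val)
    (fun a : {a : V // a ∈ S} => a.val)).rank

set_option synthInstance.maxHeartbeats 1000000
set_option maxHeartbeats 1000000

lemma interlace_key_identity {V : Type} [Fintype V] [DecidableEq V] (A : Matrix V V (ZMod 2)) (S : Finset V) :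
    iasRk A (chiPhiTransversal S) + S.card = Fintype.card V + principalRank A S := by
  classical
  set g : V → V → ZMod 2 :=
    fun v => if v ∈ S then (fun w => A w v) else (fun w => if w = v then 1 else 0) with hg
  have himg : iasCol A '' chiPhiTransversal S = Set.range g := by
    ext f
    constructor
    · rintro ⟨⟨v, t⟩, hp, rfl⟩
      rcases hp with ⟨ht, hv⟩ | ⟨ht, hv⟩ <;> subst ht <;> exact ⟨v, by simp [hg, iasCol, hv]⟩
    · rintro ⟨v, rfl⟩
      by_cases hv : v ∈ S
      · exact ⟨(v, GType.chi), Or.inl ⟨rfl, hv⟩, by simp [hg, iasCol, hv]⟩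
      · exact ⟨(v, GType.phi), Or.inr ⟨rfl, hv⟩, by simp [hg, iasCol, hv]⟩
  set π : (V → ZMod 2) →ₗ[ZMod 2] ({a : V // a ∈ S} → ZMod 2) :=
    LinearMap.funLeft (ZMod 2) (ZMod 2) Subtype.val with hπ
  set T := Submodule.span (ZMod 2) (Set.range g) with hT
  -- kernel of π is contained in T
  have hker : LinearMap.ker π ≤ T := by
    intro f hf
    have hf0 : ∀ v ∈ S, f v = 0 := by
      intro v hv
      have := congrFun (LinearMap.mem_ker.mp hf) ⟨v, hv⟩
      simpa [hπ, LinearMap.funLeft_apply] using this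
    have hfe : f = ∑ v ∈ Finset.univ.filter (· ∉ S), f v • g v := by
      funext w
      rw [Finset.sum_apply]
      by_cases hw : w ∈ S
      · rw [hf0 w hw]
        refine (Finset.sum_eq_zero ?_).symm
        intro v hv
        simp only [Finset.mem_filter] at hv
        simp [hg, hv.2, Pi.smul_apply, smul_eq_mul]
        intro h; exact absurd (h ▸ hw) hv.2
      · rw [Finset.sum_eq_single w]
        · simp [hg, hw]
        · intro v hv hne
          simp only [Finset.mem_filter] at hv
          simp [hg, hv.2, Ne.symm hne]
        · intro h; simp [hw] at h
    rw [hfe]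
    exact Submodule.sum_mem _ fun v _ => Submodule.smul_mem _ _ (Submodule.subset_span ⟨v, rfl⟩)
  -- rank-nullity for π restricted to T
  set fT : T →ₗ[ZMod 2] ({a : V // a ∈ S} → ZMod 2) := π.comp T.subtype with hfT
  have hrn : Module.finrank (ZMod 2) (LinearMap.range fT)
      + Module.finrank (ZMod 2) (LinearMap.ker fT) = Module.finrank (ZMod 2) T :=
    LinearMap.finrank_range_add_finrank_ker fT
  -- ker fT ≃ ker π
  have hkerT : Module.finrank (ZMod 2) (LinearMap.ker fT)
      = Module.finrank (ZMod 2) (LinearMap.ker π) := by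
    have : LinearMap.ker fT = Submodule.comap T.subtype (LinearMap.ker π) := by
      rw [hfT, LinearMap.ker_comp]
    rw [this]
    exact (Submodule.comapSubtypeEquivOfLe hker).finrank_eq
  -- finrank ker π
  have hπsurj : Function.Surjective π :=
    LinearMap.funLeft_surjective_of_injective _ _ _ Subtype.val_injective
  have hkerπ : Module.finrank (ZMod 2) (LinearMap.ker π) + S.card = Fintype.card V := by
    have h1 := LinearMap.finrank_range_add_finrank_ker π
    rw [LinearMap.range_eq_top.mpr hπsurj, finrank_top,
      Module.finrank_fintype_fun_eq_card, Module.finrank_fintype_fun_eq_card,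
      Fintype.card_coe] at h1
    omega
  -- range fT is spanned by columns of A[S]
  set M := A.submatrix (fun a : {a : V // a ∈ S} => a.val) (fun a : {a : V // a ∈ S} => a.val)
    with hM
  have hrange : LinearMap.range fT = Submodule.span (ZMod 2) (Set.range M.transpose) := by
    rw [hfT, LinearMap.range_comp, Submodule.range_subtype, hT, Submodule.map_span,
      ← Set.range_comp]
    apply le_antisymm <;> rw [Submodule.span_le]
    · rintro _ ⟨v, rfl⟩
      by_cases hv : v ∈ S
      · apply Submodule.subset_span
        exact ⟨⟨v, hv⟩, by funext s; simp [hπ, hg, hv, LinearMap.funLeft_apply, hM,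
          Matrix.transpose_apply, Matrix.submatrix_apply]⟩
      · have : (π ∘ g) v = 0 := by
          funext s
          have hs : (s : V) ≠ v := by rintro rfl; exact hv s.2
          simp [hπ, LinearMap.funLeft_apply, hg, hv, hs]
        rw [this]; exact Submodule.zero_mem _
    · rintro _ ⟨s', rfl⟩
      apply Submodule.subset_span
      exact ⟨s'.val, by funext s; simp [hπ, hg, s'.2, LinearMap.funLeft_apply, hM,
        Matrix.transpose_apply, Matrix.submatrix_apply]⟩
  have hrank : Module.finrank (ZMod 2) (LinearMap.range fT) = principalRank A S := by
    rw [hrange, principalRank, ← hM, Matrix.rank_eq_finrank_span_cols]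
    rfl
  have hiasRk : iasRk A (chiPhiTransversal S) = Module.finrank (ZMod 2) T := by
    rw [iasRk, himg, hT]
  omega

/-- the key identity `|V| − r(T_S) = |S| − rank A[S]` (stated additively:
`r(T_S) + |S| = |V| + rank A[S]`), and the resulting expression of the two-variable
interlace polynomial `q(G)(x,y) = Σ_S (x−1)^{rank A[S]} (y−1)^{|S|−rank A[S]}` as the sum,
over ψ-free transversals `T = T_S` of `W(G)`, of
`(x−1)^{|S(T)|} (y−1)^{|V|−r(T)} (x−1)^{r(T)−|V|}` (the transversal section of the
parametrized rank polynomial of `M(IAS(G))` with `a(v,φ)=1`, `a(v,χ)=x−1`, `a(v,ψ)=0`,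
`b≡1`, `s=y−1`, `z=1/(x−1)`). -/
theorem interlace_from_parametrized_tutte {V : Type} [Fintype V] [DecidableEq V]
    {K : Type} [Field K] (A : Matrix V V (ZMod 2)) (hA : A.IsSymm)
    (x y : K) (hx : x ≠ 1) :
    (∀ S : Finset V,
      iasRk A (chiPhiTransversal S) + S.card =
        Fintype.card V + principalRank A S) ∧
    (∑ S : Finset V,
        (x - 1) ^ principalRank A S * (y - 1) ^ (S.card - principalRank A S) =
      ∑ S : Finset V,
        (x - 1) ^ S.card *
          (y - 1) ^ (Fintype.card V - iasRk A (chiPhiTransversal S)) *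
          (x - 1) ^ ((iasRk A (chiPhiTransversal S) : ℤ) - (Fintype.card V : ℤ))) := by
  
  classical
  have hkey : ∀ S : Finset V,
      iasRk A (chiPhiTransversal S) + S.card = Fintype.card V + principalRank A S :=
    fun S => interlace_key_identity A S
  refine ⟨hkey, ?_⟩
  apply Finset.sum_congr rfl
  intro S _
  have h := hkey S
  have hu : x - 1 ≠ 0 := sub_ne_zero.mpr hx
  have h1 : principalRank A S ≤ S.card := by
    have := Matrix.rank_le_card_width (A.submatrix
      (fun a : {a : V // a ∈ S} => a.val) (fun a : {a : V // a ∈ S} => a.val))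
    simpa [principalRank, Fintype.card_coe] using this
  have h2 : iasRk A (chiPhiTransversal S) ≤ Fintype.card V := by
    have := Submodule.finrank_le (Submodule.span (ZMod 2) (iasCol A '' chiPhiTransversal S))
    simpa [iasRk, Module.finrank_fintype_fun_eq_card] using this
  set r := iasRk A (chiPhiTransversal S)
  set p := principalRank A S
  have hz : (r : ℤ) + S.card = Fintype.card V + p := by exact_mod_cast h
  have e1 : Fintype.card V - r = S.card - p := by omega
  have e2 : (r : ℤ) - Fintype.card V = (p : ℤ) - S.card := by omega
  rw [e1, e2]
  have e3 : (x - 1) ^ S.card * (x - 1) ^ ((p : ℤ) - S.card) = (x - 1) ^ p := by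
    rw [← zpow_natCast (x - 1) S.card, ← zpow_natCast (x - 1) p, ← zpow_add₀ hu]
    congr 1
    ring
  rw [mul_right_comm, e3]
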